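/- If a, b ∈ (0,1) satisfy log a / log b ∉ ℚ, then the set {m·log a + n·log b : m ∈ ℕ, n ∈ ℤ} is dense in (-∞, 0). -/

import Mathlib

open Set Real

theorem dense_log_combinations_in_neg
    (a b : ℝ) (ha : a ∈ Set.Ioo (0:ℝ) 1) (hb : b ∈ Set.Ioo (0:ℝ) 1)
    (hirr : Irrational (Real.log a / Real.log b)) :
    Set.Iio (0:ℝ) ⊆
      closure {x : ℝ | ∃ (m : ℕ) (n : ℤ), x = (m : ℝ) * Real.log a + (n : ℝ) * Real.log b} := by
  set α := Real.log a with hαdef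
  set β := Real.log b with hβdef
  have hα : α < 0 := Real.log_neg ha.1 ha.2
  have hβ : β < 0 := Real.log_neg hb.1 hb.2
  have hT : (0:ℝ) < -β := by linarith
  haveI : Fact ((0:ℝ) < -β) := ⟨hT⟩
  -- The subgroup generated by α and -β is dense in ℝ
  set H : AddSubgroup ℝ := AddSubgroup.closure {α, -β} with hHdef
  have hHd : Dense (H : Set ℝ) := by
    rcases H.dense_or_cyclic with h | ⟨c, hc⟩
    · exact h
    · exfalso
      have hαH : α ∈ H := AddSubgroup.subset_closure (by simp)
      have hβH : -β ∈ H := AddSubgroup.subset_closure (by simp)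
      rw [hc, AddSubgroup.mem_closure_singleton] at hαH hβH
      obtain ⟨p, hp⟩ := hαH
      obtain ⟨q, hq⟩ := hβH
      rw [zsmul_eq_mul] at hp hq
      have hq0 : (q:ℝ) ≠ 0 := by
        intro h; rw [h, zero_mul] at hq; linarith
      have hc0 : (c:ℝ) ≠ 0 := by
        intro h; rw [h, mul_zero] at hq; linarith
      apply hirr
      refine ⟨(-p : ℚ)/(q : ℚ), ?_⟩
      have hβc : β = -(q * c) := by linarith
      rw [hβc, ← hp]
      push_cast
      field_simp
  -- Pass to the circle ℝ / ℤ•(-β)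
  set y : AddCircle (-β) := (α : AddCircle (-β)) with hydef
  have hsurj : Function.Surjective ((↑·) : ℝ → AddCircle (-β)) := fun z =>
    QuotientAddGroup.induction_on z (fun x => ⟨x, rfl⟩)
  have hcont : Continuous ((↑·) : ℝ → AddCircle (-β)) := continuous_quotient_mk'
  have himg : Dense (((↑·) : ℝ → AddCircle (-β)) '' (H : Set ℝ)) :=
    hsurj.denseRange.dense_image hcont hHd
  have hzd : DenseRange (fun n : ℤ => n • y) := by
    rw [denseRange_iff_closure_range]
    rw [dense_iff_closure_eq] at himg
    refine subset_antisymm (Set.subset_univ _) ?_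
    rw [← himg]
    apply closure_mono
    rintro _ ⟨x, hx, rfl⟩
    rw [SetLike.mem_coe, AddSubgroup.mem_closure_pair] at hx
    obtain ⟨m, n, rfl⟩ := hx
    refine ⟨m, ?_⟩
    show m • y = ((m • α + n • -β : ℝ) : AddCircle (-β))
    rw [QuotientAddGroup.mk_add, QuotientAddGroup.mk_zsmul, QuotientAddGroup.mk_zsmul]
    have h0 : ((-β : ℝ) : AddCircle (-β)) = 0 := AddCircle.coe_period (-β)
    rw [h0, smul_zero, add_zero]
  -- In a compact group, density of ℤ-multiples gives density of ℕ-multiples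
  have hnd : DenseRange (fun m : ℕ => m • y) := denseRange_zsmul_iff_nsmul.mp hzd
  -- Pull back to ℝ
  have hpre : {x : ℝ | ∃ (m : ℕ) (n : ℤ), x = (m : ℝ) * α + (n : ℝ) * β}
      = ((↑·) : ℝ → AddCircle (-β)) ⁻¹' (Set.range (fun m : ℕ => m • y)) := by
    ext x
    simp only [Set.mem_setOf_eq, Set.mem_preimage, Set.mem_range]
    constructor
    · rintro ⟨m, n, rfl⟩
      refine ⟨m, ?_⟩
      have h1 : (m : ℝ) * α + (n : ℝ) * β - m • α ∈ AddSubgroup.zmultiples (-β) := by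
        refine AddSubgroup.mem_zmultiples_iff.mpr ⟨-n, ?_⟩
        push_cast [zsmul_eq_mul, nsmul_eq_mul]
        ring
      have := (QuotientAddGroup.eq_iff_sub_mem).mpr h1
      rw [this, hydef]
      rw [QuotientAddGroup.mk_nsmul]
    · rintro ⟨m, hm⟩
      rw [← QuotientAddGroup.mk_nsmul, eq_comm, QuotientAddGroup.eq_iff_sub_mem] at hm
      obtain ⟨n, hn⟩ := AddSubgroup.mem_zmultiples_iff.mp hm
      refine ⟨m, -n, ?_⟩
      rw [zsmul_eq_mul] at hn
      rw [nsmul_eq_mul] at hn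
      push_cast
      linarith
  have hdense : Dense {x : ℝ | ∃ (m : ℕ) (n : ℤ), x = (m : ℝ) * α + (n : ℝ) * β} := by
    rw [hpre, dense_iff_closure_eq,
      ← (QuotientAddGroup.isOpenMap_coe).preimage_closure_eq_closure_preimage hcont]
    rw [hnd.closure_eq]
    simp
  intro x _
  exact hdense x
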